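/- arXiv:2502.16011 — 6 statements merged into one kernel-verified Lean document; each statement's English description precedes it below -/
import Mathlib

section
/- Lefschetz zeta function of a diagonal map on a wedge sum: in the diagonal algebraic model, the identity ζ_f(t) = (1 − t)^{s−1} · ∏_{i=1}^s ζ_{f_ii}(t) holds in the ring ℚ[[t]] of formal power series. -/
open PowerSeries Finset

/-- The exponential `exp(f) = ∑_{j ≥ 0} f^j / j!` of a formal power series `f ∈ ℚ[[t]]`
(intended for series with zero constant term, for which each coefficient of `exp(f)` is
the corresponding coefficient of the finite sum `∑_{j=0}^n f^j / j!`). -/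
noncomputable def expPS (f : PowerSeries ℚ) : PowerSeries ℚ :=
  PowerSeries.mk fun n =>
    PowerSeries.coeff n (∑ j ∈ Finset.range (n + 1), (j.factorial : ℚ)⁻¹ • f ^ j)

/-- The Lefschetz zeta function `ζ(t) = exp(∑_{m ≥ 1} L(m)·t^m/m) ∈ ℚ[[t]]` associated with a
sequence of Lefschetz numbers `L : ℕ → ℚ` (the value `L 0` is irrelevant). -/
noncomputable def lefschetzZeta (L : ℕ → ℚ) : PowerSeries ℚ :=
  expPS (PowerSeries.mk fun m => if m = 0 then 0 else L m / (m : ℚ))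

section Aux
lemma coeff_pow_mul_pow_eq_zero {f g : PowerSeries ℚ}
    (hf : constantCoeff f = 0) (hg : constantCoeff g = 0)
    {n a b : ℕ} (h : n < a + b) : PowerSeries.coeff n (f ^ a * g ^ b) = 0 := by
  have hd : (X : PowerSeries ℚ) ^ (a + b) ∣ f ^ a * g ^ b := by
    rw [pow_add]
    exact mul_dvd_mul (pow_dvd_pow_of_dvd (X_dvd_iff.mpr hf) a)
      (pow_dvd_pow_of_dvd (X_dvd_iff.mpr hg) b)
  exact (X_pow_dvd_iff.mp hd) n h

lemma coeff_pow_eq_zero {f : PowerSeries ℚ} (hf : constantCoeff f = 0)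
    {n j : ℕ} (h : n < j) : PowerSeries.coeff n (f ^ j) = 0 := by
  have := coeff_pow_mul_pow_eq_zero hf hf (n := n) (a := j) (b := 0) (by omega)
  simpa using this

/-- Truncation independence. -/
lemma coeff_expPS_eq {f : PowerSeries ℚ} (hf : constantCoeff f = 0)
    {a M : ℕ} (h : a ≤ M) :
    PowerSeries.coeff a (expPS f) =
      PowerSeries.coeff a (∑ j ∈ Finset.range (M + 1), (j.factorial : ℚ)⁻¹ • f ^ j) := by
  rw [expPS, coeff_mk, map_sum, map_sum]
  apply Finset.sum_subset (Finset.range_subset_range.mpr (by omega))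
  intro j hj hnj
  simp only [Finset.mem_range, not_lt] at hnj
  rw [map_smul, coeff_pow_eq_zero hf (by omega), smul_zero]

lemma coeff_zero_expPS (f : PowerSeries ℚ) : PowerSeries.coeff 0 (expPS f) = 1 := by
  simp [expPS]

lemma expPS_add {f g : PowerSeries ℚ} (hf : constantCoeff f = 0)
    (hg : constantCoeff g = 0) : expPS (f + g) = expPS f * expPS g := by
  have hfg : constantCoeff (f + g) = 0 := by simp [hf, hg]
  ext n
  -- RHS
  have hR : PowerSeries.coeff n (expPS f * expPS g) =
      ∑ p ∈ (Finset.range (n+1)) ×ˢ (Finset.range (n+1)),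
        ((p.1.factorial : ℚ)⁻¹ * (p.2.factorial : ℚ)⁻¹) * PowerSeries.coeff n (f ^ p.1 * g ^ p.2) := by
    rw [PowerSeries.coeff_mul]
    have hstep : ∀ p ∈ antidiagonal n,
        PowerSeries.coeff p.1 (expPS f) * PowerSeries.coeff p.2 (expPS g) =
        PowerSeries.coeff p.1 (∑ j ∈ Finset.range (n + 1), (j.factorial : ℚ)⁻¹ • f ^ j) *
        PowerSeries.coeff p.2 (∑ j ∈ Finset.range (n + 1), (j.factorial : ℚ)⁻¹ • g ^ j) := by
      intro p hp
      rw [Finset.HasAntidiagonal.mem_antidiagonal] at hp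
      rw [coeff_expPS_eq hf (M := n) (by omega), coeff_expPS_eq hg (M := n) (by omega)]
    rw [Finset.sum_congr rfl hstep, ← PowerSeries.coeff_mul, Finset.sum_mul_sum, map_sum,
      Finset.sum_product]
    refine Finset.sum_congr rfl fun j _ => ?_
    rw [map_sum]
    refine Finset.sum_congr rfl fun l _ => ?_
    rw [smul_mul_smul_comm, map_smul, smul_eq_mul]
  -- both sides equal sum over pairs with sum ≤ n
  have hR2 : PowerSeries.coeff n (expPS f * expPS g) =
      ∑ p ∈ ((Finset.range (n+1)) ×ˢ (Finset.range (n+1))).filter (fun p => p.1 + p.2 ≤ n),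
        ((p.1.factorial : ℚ)⁻¹ * (p.2.factorial : ℚ)⁻¹) * PowerSeries.coeff n (f ^ p.1 * g ^ p.2) := by
    rw [hR]
    symm
    apply Finset.sum_subset (Finset.filter_subset _ _)
    intro p hp hnp
    simp only [Finset.mem_filter, hp, true_and, not_le] at hnp
    rw [coeff_pow_mul_pow_eq_zero hf hg hnp, mul_zero]
  -- LHS
  have hL : PowerSeries.coeff n (expPS (f + g)) =
      ∑ j ∈ Finset.range (n+1), ∑ c ∈ Finset.range (j+1),
        ((c.factorial : ℚ)⁻¹ * ((j-c).factorial : ℚ)⁻¹) * PowerSeries.coeff n (f ^ c * g ^ (j - c)) := by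
    rw [coeff_expPS_eq hfg (le_refl n), map_sum]
    refine Finset.sum_congr rfl fun j _ => ?_
    rw [add_pow, Finset.smul_sum, map_sum]
    refine Finset.sum_congr rfl fun c hc => ?_
    rw [Finset.mem_range] at hc
    have hcj : c ≤ j := by omega
    rw [map_smul, smul_eq_mul, ← map_natCast (PowerSeries.C (R := ℚ)) (j.choose c),
      PowerSeries.coeff_mul_C, Nat.cast_choose ℚ hcj]
    have h1 : (c.factorial : ℚ) ≠ 0 := Nat.cast_ne_zero.mpr c.factorial_ne_zero
    have h2 : ((j - c).factorial : ℚ) ≠ 0 := Nat.cast_ne_zero.mpr (j - c).factorial_ne_zero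
    have h3 : (j.factorial : ℚ) ≠ 0 := Nat.cast_ne_zero.mpr j.factorial_ne_zero
    field_simp
  rw [hL, hR2, Finset.sum_sigma']
  refine Finset.sum_nbij' (fun x => (x.2, x.1 - x.2)) (fun p => ⟨p.1 + p.2, p.1⟩)
    ?_ ?_ ?_ ?_ ?_
  · intro x hx
    simp only [Finset.mem_sigma, Finset.mem_range] at hx
    simp only [Finset.mem_filter, Finset.mem_product, Finset.mem_range]
    omega
  · intro p hp
    simp only [Finset.mem_filter, Finset.mem_product, Finset.mem_range] at hp
    simp only [Finset.mem_sigma, Finset.mem_range]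
    omega
  · intro x hx
    simp only [Finset.mem_sigma, Finset.mem_range] at hx
    ext <;> simp; omega
  · intro p hp
    simp
  · intro x hx
    rfl

noncomputable def Pgeo : PowerSeries ℚ :=
  PowerSeries.mk fun m => if m = 0 then 0 else (m : ℚ)⁻¹

lemma constantCoeff_Pgeo : constantCoeff Pgeo = 0 := by
  simp [Pgeo, ← PowerSeries.coeff_zero_eq_constantCoeff_apply]

lemma derivative_Pgeo : d⁄dX ℚ Pgeo = PowerSeries.mk fun _ => 1 := by
  ext n
  rw [PowerSeries.coeff_derivative, Pgeo, PowerSeries.coeff_mk, PowerSeries.coeff_mk]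
  simp only [Nat.succ_ne_zero, if_false, Nat.cast_add, Nat.cast_one]
  rw [inv_mul_cancel₀ (by positivity)]

/-- chain rule at the truncated level -/
lemma derivative_expseries (f : PowerSeries ℚ) (M : ℕ) :
    d⁄dX ℚ (∑ j ∈ Finset.range (M + 2), (j.factorial : ℚ)⁻¹ • f ^ j) =
      d⁄dX ℚ f * ∑ j ∈ Finset.range (M + 1), (j.factorial : ℚ)⁻¹ • f ^ j := by
  rw [map_sum, Finset.sum_range_succ']
  simp only [pow_zero, Nat.factorial_zero, Nat.cast_one, inv_one, one_smul, Derivation.map_one_eq_zero,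
    map_smul]
  rw [add_zero, Finset.mul_sum]
  refine Finset.sum_congr rfl fun j _ => ?_
  rw [Derivation.map_smul, Derivation.leibniz_pow, Nat.succ_sub_one,
    ← Nat.cast_smul_eq_nsmul ℚ, smul_smul, smul_eq_mul (a := f ^ j)]
  have h3 : (j.factorial : ℚ) ≠ 0 := Nat.cast_ne_zero.mpr j.factorial_ne_zero
  have hsc : (((j+1).factorial : ℚ))⁻¹ * ((j+1 : ℕ) : ℚ) = (j.factorial : ℚ)⁻¹ := by
    rw [Nat.factorial_succ]
    push_cast
    have h4 : ((j : ℚ) + 1) ≠ 0 := by positivity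
    field_simp
  rw [hsc, mul_smul_comm, mul_comm (f ^ j)]

lemma expPS_Pgeo : expPS Pgeo = PowerSeries.mk fun _ => (1 : ℚ) := by
  ext n
  induction n using Nat.strong_induction_on with
  | _ n ih =>
    match n with
    | 0 => rw [coeff_zero_expPS]; simp
    | (n+1) =>
      have key : (PowerSeries.coeff (n+1) (expPS Pgeo)) * ((n : ℚ)+1) =
          ∑ p ∈ antidiagonal n, PowerSeries.coeff p.2 (expPS Pgeo) := by
        rw [coeff_expPS_eq constantCoeff_Pgeo (M := n+1) le_rfl]
        have := PowerSeries.coeff_derivative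
          (∑ j ∈ Finset.range (n + 1 + 1), (j.factorial : ℚ)⁻¹ • Pgeo ^ j) n
        push_cast at this
        rw [← this, derivative_expseries, PowerSeries.coeff_mul]
        refine Finset.sum_congr rfl fun p hp => ?_
        rw [Finset.HasAntidiagonal.mem_antidiagonal] at hp
        rw [derivative_Pgeo, PowerSeries.coeff_mk, one_mul,
          ← coeff_expPS_eq constantCoeff_Pgeo (M := n) (by omega)]
      rw [Finset.Nat.sum_antidiagonal_eq_sum_range_succ_mk] at key
      have hsum : ∑ k ∈ Finset.range (n+1),
          PowerSeries.coeff (n - k) (expPS Pgeo) = (n : ℚ) + 1 := by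
        have h1 : ∀ k ∈ Finset.range (n+1),
            PowerSeries.coeff (n - k) (expPS Pgeo) = 1 := by
          intro k hk
          rw [Finset.mem_range] at hk
          have := ih (n - k) (by omega)
          rwa [PowerSeries.coeff_mk] at this
        rw [Finset.sum_congr rfl h1, Finset.sum_const, Finset.card_range]
        simp
      rw [hsum] at key
      rw [PowerSeries.coeff_mk]
      have hne : ((n : ℚ) + 1) ≠ 0 := by positivity
      field_simp at key
      exact key

lemma one_sub_X_mul_expPS_Pgeo : (1 - PowerSeries.X) * expPS Pgeo = 1 := by
  rw [expPS_Pgeo]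
  ext n
  rw [sub_mul, one_mul, map_sub]
  match n with
  | 0 => simp
  | (n+1) => simp [PowerSeries.coeff_succ_X_mul, PowerSeries.coeff_one]


lemma expPS_zero : expPS (0 : PowerSeries ℚ) = 1 := by
  ext n
  rw [expPS, PowerSeries.coeff_mk, Finset.sum_range_succ']
  simp [zero_pow]

lemma expPS_nsmul (k : ℕ) : expPS ((k : ℕ) • Pgeo) = (expPS Pgeo) ^ k := by
  induction k with
  | zero => simp [expPS_zero]
  | succ k ih =>
    have hks : constantCoeff ((k : ℕ) • Pgeo) = 0 := by
      rw [map_nsmul, constantCoeff_Pgeo, smul_zero]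
    rw [succ_nsmul, expPS_add hks constantCoeff_Pgeo, ih, pow_succ]

lemma expPS_sum {ι : Type*} (u : Finset ι) (f : ι → PowerSeries ℚ)
    (h : ∀ i ∈ u, constantCoeff (f i) = 0) :
    expPS (∑ i ∈ u, f i) = ∏ i ∈ u, expPS (f i) := by
  induction u using Finset.cons_induction with
  | empty => simp [expPS_zero]
  | cons a u ha ih =>
    rw [Finset.sum_cons, Finset.prod_cons,
      expPS_add (h a (Finset.mem_cons_self a u)) ?_, ih ?_]
    · intro i hi; exact h i (Finset.mem_cons_of_mem hi)
    · rw [map_sum]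
      exact Finset.sum_eq_zero fun i hi => h i (Finset.mem_cons_of_mem hi)

end Aux

/-- **Lefschetz zeta function of a diagonal map on a wedge sum.**
In the diagonal algebraic model (`A i k` is the endomorphism induced on the `k`-th rational
homology by the coordinate map `f_ii : X_i → X_i`), with Lefschetz numbers
`L m = 1 + ∑_{k=1}^N (-1)^k ∑_{i=1}^s tr(A_{i,k}^m)` and
`Lc i m = 1 + ∑_{k=1}^N (-1)^k tr(A_{i,k}^m)`, the zeta functions
`ζ_f = exp(∑_{m≥1} L(f^m) t^m/m)` and `ζ_{f_ii} = exp(∑_{m≥1} L(f_ii^m) t^m/m)` satisfy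
`ζ_f(t) = (1 − t)^{s−1} · ∏_{i=1}^s ζ_{f_ii}(t)` in `ℚ[[t]]`. -/
theorem stmt2 (s N : ℕ) (hs : 1 ≤ s) (hN : 1 ≤ N)
    (V : Fin s → Fin N → Type*)
    [∀ i k, AddCommGroup (V i k)] [∀ i k, Module ℚ (V i k)]
    [∀ i k, FiniteDimensional ℚ (V i k)]
    (A : ∀ i k, V i k →ₗ[ℚ] V i k)
    (L : ℕ → ℚ)
    (hL : ∀ m, L m =
      1 + ∑ k : Fin N, (-1 : ℚ) ^ ((k : ℕ) + 1) *
        ∑ i : Fin s, LinearMap.trace ℚ (V i k) ((A i k) ^ m))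
    (Lc : Fin s → ℕ → ℚ)
    (hLc : ∀ i m, Lc i m =
      1 + ∑ k : Fin N, (-1 : ℚ) ^ ((k : ℕ) + 1) *
        LinearMap.trace ℚ (V i k) ((A i k) ^ m)) :
    lefschetzZeta L =
      (1 - PowerSeries.X) ^ (s - 1) * ∏ i : Fin s, lefschetzZeta (Lc i) := by
  set Ls : PowerSeries ℚ := PowerSeries.mk fun m => if m = 0 then 0 else L m / (m : ℚ) with hLs
  set Lcs : Fin s → PowerSeries ℚ :=
    fun i => PowerSeries.mk fun m => if m = 0 then 0 else Lc i m / (m : ℚ) with hLcs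
  have hLs0 : constantCoeff Ls = 0 := by
    rw [← PowerSeries.coeff_zero_eq_constantCoeff_apply, hLs, PowerSeries.coeff_mk]; simp
  have hLcs0 : ∀ i, constantCoeff (Lcs i) = 0 := by
    intro i
    rw [← PowerSeries.coeff_zero_eq_constantCoeff_apply, hLcs, PowerSeries.coeff_mk]; simp
  -- the key coefficient identity
  have hkey : ∀ m : ℕ, (∑ i : Fin s, Lc i m) = L m + ((s : ℚ) - 1) := by
    intro m
    rw [hL m]
    have : ∑ i : Fin s, Lc i m =
        (s : ℚ) + ∑ i : Fin s, ∑ k : Fin N, (-1 : ℚ) ^ ((k : ℕ) + 1) *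
          LinearMap.trace ℚ (V i k) ((A i k) ^ m) := by
      rw [Finset.sum_congr rfl fun i _ => hLc i m, Finset.sum_add_distrib]
      simp
    rw [this, Finset.sum_comm]
    have : ∀ k : Fin N, ∑ i : Fin s, (-1 : ℚ) ^ ((k : ℕ) + 1) *
        LinearMap.trace ℚ (V i k) ((A i k) ^ m) =
        (-1 : ℚ) ^ ((k : ℕ) + 1) * ∑ i : Fin s, LinearMap.trace ℚ (V i k) ((A i k) ^ m) := by
      intro k; rw [Finset.mul_sum]
    rw [Finset.sum_congr rfl fun k _ => this k]
    ring
  -- sum of the coefficient series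
  have hsum : (∑ i : Fin s, Lcs i) = Ls + (s - 1 : ℕ) • Pgeo := by
    ext m
    rw [map_sum, map_add, map_nsmul]
    match m with
    | 0 => simp [hLcs, hLs, Pgeo]
    | (m+1) =>
      have hm : ((m : ℚ) + 1) ≠ 0 := by positivity
      simp only [hLcs, hLs, Pgeo, PowerSeries.coeff_mk, Nat.succ_ne_zero, if_false,
        smul_eq_mul, nsmul_eq_mul]
      rw [← Finset.sum_div, hkey (m + 1)]
      have hs1 : ((s - 1 : ℕ) : ℚ) = (s : ℚ) - 1 := by
        have : (1 : ℕ) ≤ s := hs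
        push_cast [Nat.cast_sub this]
        ring
      push_cast
      rw [hs1]
      field_simp
  -- put everything together
  have h1 : ∏ i : Fin s, lefschetzZeta (Lc i) = expPS (∑ i : Fin s, Lcs i) := by
    rw [expPS_sum _ _ fun i _ => hLcs0 i]
    rfl
  have h2 : expPS (∑ i : Fin s, Lcs i) = expPS Ls * (expPS Pgeo) ^ (s - 1) := by
    rw [hsum, expPS_add hLs0 (by rw [map_nsmul, constantCoeff_Pgeo, smul_zero]),
      expPS_nsmul]
  show expPS Ls = _
  rw [h1, h2]
  have : (1 - PowerSeries.X) ^ (s-1) * (expPS Ls * (expPS Pgeo) ^ (s-1)) =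
      expPS Ls * ((1 - PowerSeries.X) * expPS Pgeo) ^ (s-1) := by
    rw [mul_pow]; ring
  rw [this, one_sub_X_mul_expPS_Pgeo, one_pow, mul_one]
end

section
/- Dold coefficients of a cyclic permutative map on a wedge sum: in the cyclic algebraic model, (a) for every m ≥ 1 one has ℓ(f^{sm}) = ∑_{j=1}^s ℓ(f_jj^{sm}), and (b) ℓ(f^m) = 0 whenever m > 1 and m is not divisible by s. -/
open LinearMap Finset

section TracePi
variable {ι : Type*} [Fintype ι] [DecidableEq ι] (M : ι → Type*)
    [∀ i, AddCommGroup (M i)] [∀ i, Module ℚ (M i)] [∀ i, FiniteDimensional ℚ (M i)]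

lemma trace_pi_eq (T : (Π i, M i) →ₗ[ℚ] Π i, M i) :
    trace ℚ (Π i, M i) T
      = ∑ i, trace ℚ (M i) (proj i ∘ₗ T ∘ₗ single ℚ M i) := by
  have hid : (∑ i, (single ℚ M i) ∘ₗ (proj i : (Π j, M j) →ₗ[ℚ] M i)) = LinearMap.id := by
    ext x
    simp
  have hT : T = ∑ i, (T ∘ₗ single ℚ M i) ∘ₗ proj i := by
    conv_lhs => rw [← LinearMap.comp_id T, ← hid]
    ext x
    simp [LinearMap.sum_apply, comp_assoc]
  conv_lhs => rw [hT]
  rw [map_sum]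
  refine Finset.sum_congr rfl fun i _ => ?_
  rw [trace_comp_comm']

end TracePi

-- Möbius sum over divisors
lemma moebius_div_sum (m : ℕ) :
    ∑ r ∈ m.divisors, ((ArithmeticFunction.moebius (m / r) : ℤ) : ℚ)
      = if m = 1 then 1 else 0 := by
  rcases eq_or_ne m 0 with rfl | hm
  · simp
  have h := congrArg (fun f : ArithmeticFunction ℤ => f m)
    ArithmeticFunction.coe_zeta_mul_moebius
  simp only [ArithmeticFunction.mul_apply, ArithmeticFunction.one_apply] at h
  rw [Nat.sum_divisorsAntidiagonal
    (fun a b => ((ArithmeticFunction.zeta : ArithmeticFunction ℤ)) a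
      * ArithmeticFunction.moebius b)] at h
  have key : ∑ r ∈ m.divisors, (ArithmeticFunction.moebius (m / r) : ℤ)
      = if m = 1 then 1 else 0 := by
    rw [← h]
    refine Finset.sum_congr rfl fun r hr => ?_
    rw [Nat.mem_divisors] at hr
    have hr0 : r ≠ 0 := by rintro rfl; exact hm (Nat.eq_zero_of_zero_dvd hr.1)
    simp [ArithmeticFunction.natCoe_apply, ArithmeticFunction.zeta_apply, hr0]
  calc ∑ r ∈ m.divisors, ((ArithmeticFunction.moebius (m / r) : ℤ) : ℚ)
      = ((∑ r ∈ m.divisors, (ArithmeticFunction.moebius (m / r) : ℤ) : ℤ) : ℚ) := by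
        push_cast; ring_nf
    _ = _ := by rw [key]; split <;> simp


/-- **Dold coefficients of a cyclic permutative squared-by-blocks map on a wedge sum.**
In the cyclic algebraic model (`σ` a single `s`-cycle, `F k` the block-permutation
endomorphism of `⊕_i V i k` built from the maps `A i k : V i k → V (σ i) k`), with
Lefschetz numbers `L m = 1 + ∑_{k=1}^N (-1)^k tr(F_k^m)`,
`Lc i m = 1 + ∑_{k=1}^N (-1)^k tr(π_{i,k} ∘ F_k^m ∘ ι_{i,k})`, and Dold coefficients
`ℓ(f^m) = ∑_{r∣m} μ(m/r)·L(f^r)`, `ℓ(f_ii^m) = ∑_{r∣m} μ(m/r)·L(f_ii^r)`: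
(a) `ℓ(f^{sm}) = ∑_{j=1}^s ℓ(f_jj^{sm})` for every `m ≥ 1`, and
(b) `ℓ(f^m) = 0` whenever `m > 1` and `s ∤ m`. -/
theorem stmt7 (s N : ℕ) (hs : 1 ≤ s) (hN : 1 ≤ N)
    (σ : Equiv.Perm (Fin s))
    (hσ : ∀ (i : Fin s) (m : ℕ), (σ ^ m) i = i ↔ s ∣ m)
    (V : Fin s → Fin N → Type*)
    [∀ i k, AddCommGroup (V i k)] [∀ i k, Module ℚ (V i k)]
    [∀ i k, FiniteDimensional ℚ (V i k)]
    (hdim : ∀ (i i' : Fin s) (k : Fin N),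
      Module.finrank ℚ (V i k) = Module.finrank ℚ (V i' k))
    (A : ∀ i k, V i k →ₗ[ℚ] V (σ i) k)
    (F : ∀ k, (Π i, V i k) →ₗ[ℚ] (Π i, V i k))
    (hF : ∀ k (i : Fin s) (v : V i k), F k (Pi.single i v) = Pi.single (σ i) (A i k v))
    (L : ℕ → ℚ)
    (hL : ∀ m, L m =
      1 + ∑ k : Fin N, (-1 : ℚ) ^ ((k : ℕ) + 1) *
        LinearMap.trace ℚ (Π i, V i k) ((F k) ^ m))
    (Lc : Fin s → ℕ → ℚ)
    (hLc : ∀ i m, Lc i m =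
      1 + ∑ k : Fin N, (-1 : ℚ) ^ ((k : ℕ) + 1) *
        LinearMap.trace ℚ (V i k)
          ((LinearMap.proj i) ∘ₗ ((F k) ^ m) ∘ₗ (LinearMap.single ℚ (fun j => V j k) i)))
    (ℓ : ℕ → ℚ)
    (hℓ : ∀ m, ℓ m = ∑ r ∈ m.divisors, ((ArithmeticFunction.moebius (m / r) : ℤ) : ℚ) * L r)
    (ℓc : Fin s → ℕ → ℚ)
    (hℓc : ∀ i m, ℓc i m =
      ∑ r ∈ m.divisors, ((ArithmeticFunction.moebius (m / r) : ℤ) : ℚ) * Lc i r) :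
    (∀ m, 1 ≤ m → ℓ (s * m) = ∑ j : Fin s, ℓc j (s * m)) ∧
    (∀ m, 1 < m → ¬ s ∣ m → ℓ m = 0) := by
  classical
  -- blockwise behaviour of powers of F
  have hblock : ∀ (k : Fin N) (n : ℕ) (i : Fin s) (v : V i k) (j : Fin s),
      j ≠ (σ ^ n) i → (((F k) ^ n) (Pi.single i v)) j = 0 := by
    intro k n
    induction n with
    | zero =>
      intro i v j hj
      simp only [pow_zero, Equiv.Perm.coe_one, id_eq] at hj ⊢
      simp [Pi.single_eq_of_ne hj]
    | succ n ih =>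
      intro i v j hj
      have h1 : ((F k) ^ (n + 1)) (Pi.single i v)
          = ((F k) ^ n) (F k (Pi.single i v)) := by
        rw [pow_succ]; rfl
      rw [h1, hF]
      apply ih
      intro he
      apply hj
      rw [pow_succ, Equiv.Perm.mul_apply, he]
  -- diagonal blocks vanish when s ∤ r
  have hzero : ∀ (k : Fin N) (r : ℕ) (i : Fin s), ¬ s ∣ r →
      (LinearMap.proj i) ∘ₗ ((F k) ^ r) ∘ₗ (LinearMap.single ℚ (fun j => V j k) i)
        = (0 : V i k →ₗ[ℚ] V i k) := by
    intro k r i h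
    ext v
    simp only [LinearMap.comp_apply, LinearMap.proj_apply, LinearMap.coe_single,
      Pi.single, LinearMap.zero_apply]
    exact hblock k r i v i (fun he => h ((hσ i r).mp he.symm))
  -- trace decomposition identity relating L and the Lc's
  have hLs : ∀ r, ∑ j, Lc j r = (s : ℚ) - 1 + L r := by
    intro r
    have : ∑ j : Fin s, Lc j r
        = (s : ℚ) + ∑ k : Fin N, (-1 : ℚ) ^ ((k : ℕ) + 1) *
            LinearMap.trace ℚ (Π i, V i k) ((F k) ^ r) := by
      simp only [hLc]
      rw [Finset.sum_add_distrib, Finset.sum_const, Finset.card_univ, Fintype.card_fin,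
        nsmul_eq_mul, mul_one, Finset.sum_comm]
      congr 1
      refine Finset.sum_congr rfl fun k _ => ?_
      rw [← Finset.mul_sum, ← trace_pi_eq]
    rw [this, hL]
    ring
  constructor
  · -- part (a)
    intro m hm
    have hsum : ∑ j : Fin s, ℓc j (s * m)
        = ∑ r ∈ (s * m).divisors,
            ((ArithmeticFunction.moebius ((s * m) / r) : ℤ) : ℚ) * ∑ j, Lc j r := by
      simp only [hℓc]
      rw [Finset.sum_comm]
      exact Finset.sum_congr rfl fun r _ => by rw [Finset.mul_sum]
    have hdiff : ℓ (s * m) - ∑ j : Fin s, ℓc j (s * m)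
        = (1 - (s : ℚ)) *
            ∑ r ∈ (s * m).divisors, ((ArithmeticFunction.moebius ((s * m) / r) : ℤ) : ℚ) := by
      rw [hℓ, hsum, ← Finset.sum_sub_distrib, Finset.mul_sum]
      refine Finset.sum_congr rfl fun r _ => ?_
      rw [← mul_sub, hLs r]
      ring
    rw [moebius_div_sum] at hdiff
    rcases eq_or_ne (s * m) 1 with h1 | h1
    · have hs1 : s = 1 := Nat.eq_one_of_mul_eq_one_right h1
      have hsq : (s : ℚ) = 1 := by rw [hs1]; norm_num
      rw [if_pos h1, hsq] at hdiff
      linarith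
    · rw [if_neg h1, mul_zero, sub_eq_zero] at hdiff
      exact hdiff
  · -- part (b)
    intro m hm1 hsm
    have hLone : ∀ r ∈ m.divisors, L r = 1 := by
      intro r hr
      rw [Nat.mem_divisors] at hr
      have hsr : ¬ s ∣ r := fun h => hsm (h.trans hr.1)
      rw [hL]
      have htr : ∀ k : Fin N, LinearMap.trace ℚ (Π i, V i k) ((F k) ^ r) = 0 := by
        intro k
        rw [trace_pi_eq]
        refine Finset.sum_eq_zero fun j _ => ?_
        rw [hzero k r j hsr, map_zero]
      simp [htr]
    have : ℓ m = ∑ r ∈ m.divisors, ((ArithmeticFunction.moebius (m / r) : ℤ) : ℚ) := by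
      rw [hℓ]
      exact Finset.sum_congr rfl fun r hr => by rw [hLone r hr, mul_one]
    rw [this, moebius_div_sum, if_neg (by omega)]
end

section
/- Vanishing of Dold coefficients off the multiples of the cycle lengths: in the permutative algebraic model, if m > 1 and m is not divisible by s_j for any j ∈ {1,…,q}, then ℓ(f^m) = 0. -/
open LinearMap in
lemma trace_pi_eq_sum_diag {ι : Type*} [Fintype ι] [DecidableEq ι] (M : ι → Type*)
    [∀ i, AddCommGroup (M i)] [∀ i, Module ℚ (M i)] [∀ i, FiniteDimensional ℚ (M i)]
    (T : (Π i, M i) →ₗ[ℚ] Π i, M i) :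
    trace ℚ _ T = ∑ i, trace ℚ (M i) ((proj i) ∘ₗ T ∘ₗ (single ℚ M i)) := by
  have hT : T = ∑ i, T ∘ₗ (single ℚ M i) ∘ₗ (proj i) := by
    apply LinearMap.ext; intro x
    rw [LinearMap.sum_apply]
    simp only [LinearMap.comp_apply, proj_apply, coe_single]
    rw [← map_sum, Finset.univ_sum_single]
  conv_lhs => rw [hT]
  rw [map_sum]
  refine Finset.sum_congr rfl fun i _ => ?_
  rw [← LinearMap.comp_assoc, trace_comp_comm']

/-- **Vanishing of Dold coefficients off the multiples of the cycle lengths.**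
In the permutative algebraic model (`σ` a permutation of `{1,…,s}` with orbits
`Λ 1, …, Λ q` of cardinalities `s₁,…,s_q`; `F k` the block-permutation endomorphism of
`⊕_i V i k` built from the maps `A i k : V i k → V (σ i) k`), with Lefschetz numbers
`L m = 1 + ∑_{k=1}^N (-1)^k tr(F_k^m)` and Dold coefficients
`ℓ(f^m) = ∑_{r∣m} μ(m/r)·L(f^r)`: if `m > 1` and `s_j ∤ m` for every
`j ∈ {1,…,q}`, then `ℓ(f^m) = 0`. -/
theorem stmt11 (s N q : ℕ) (hs : 1 ≤ s) (hN : 1 ≤ N)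
(σ : Equiv.Perm (Fin s))
    (Λ : Fin q → Finset (Fin s))
    (hΛorb : ∀ j, ∀ i ∈ Λ j, ∀ i', i' ∈ Λ j ↔ ∃ m : ℕ, (σ ^ m) i = i')
    (hΛne : ∀ j, (Λ j).Nonempty)
    (hΛcover : ∀ i, ∃ j, i ∈ Λ j)
    (hΛdisj : ∀ j j', j ≠ j' → Disjoint (Λ j) (Λ j'))
    (sVec : Fin q → ℕ) (hsVec : ∀ j, sVec j = (Λ j).card)
    (V : Fin s → Fin N → Type*)
    [∀ i k, AddCommGroup (V i k)] [∀ i k, Module ℚ (V i k)]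
    [∀ i k, FiniteDimensional ℚ (V i k)]
    (hdim : ∀ (k : Fin N) (i i' : Fin s), (∃ m : ℕ, (σ ^ m) i = i') →
      Module.finrank ℚ (V i k) = Module.finrank ℚ (V i' k))
    (A : ∀ i k, V i k →ₗ[ℚ] V (σ i) k)
    (F : ∀ k, (Π i, V i k) →ₗ[ℚ] (Π i, V i k))
    (hF : ∀ k (i : Fin s) (v : V i k), F k (Pi.single i v) = Pi.single (σ i) (A i k v))
    (L : ℕ → ℚ)
    (hL : ∀ m, L m =
      1 + ∑ k : Fin N, (-1 : ℚ) ^ ((k : ℕ) + 1) *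
        LinearMap.trace ℚ (Π i, V i k) ((F k) ^ m))
    (Lc : Fin s → ℕ → ℚ)
    (hLc : ∀ i m, Lc i m =
      1 + ∑ k : Fin N, (-1 : ℚ) ^ ((k : ℕ) + 1) *
        LinearMap.trace ℚ (V i k)
          ((LinearMap.proj i) ∘ₗ ((F k) ^ m) ∘ₗ (LinearMap.single ℚ (fun j => V j k) i)))
    (ℓ : ℕ → ℚ)
    (hℓ : ∀ m, ℓ m = ∑ r ∈ m.divisors, ((ArithmeticFunction.moebius (m / r) : ℤ) : ℚ) * L r)
    (ℓc : Fin s → ℕ → ℚ)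
    (hℓc : ∀ i m, ℓc i m =
      ∑ r ∈ m.divisors, ((ArithmeticFunction.moebius (m / r) : ℤ) : ℚ) * Lc i r) :
    ∀ m, 1 < m → (∀ j : Fin q, ¬ sVec j ∣ m) → ℓ m = 0 := by
  intro m hm hnd
  -- blocks of powers of F
  have key : ∀ (k : Fin N) (r : ℕ) (i : Fin s) (v : V i k),
      ∃ w : V ((σ ^ r) i) k, ((F k) ^ r) (Pi.single i v) = Pi.single ((σ ^ r) i) w := by
    intro k r
    induction r with
    | zero =>
      intro i v
      have hp : (σ ^ 0) i = i := by rw [pow_zero]; rfl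
      rw [hp]
      exact ⟨v, by simp⟩
    | succ r ih =>
      intro i v
      obtain ⟨w, hw⟩ := ih i v
      have hp : (σ ^ (r + 1)) i = σ ((σ ^ r) i) := by
        rw [pow_succ']; rfl
      rw [hp]
      refine ⟨A ((σ ^ r) i) k w, ?_⟩
      rw [pow_succ' (F k) r, Module.End.mul_apply, hw, hF]
  -- vanishing of diagonal blocks at non-fixed points
  have hzero : ∀ (k : Fin N) (r : ℕ) (i : Fin s), (σ ^ r) i ≠ i →
      (LinearMap.proj i) ∘ₗ ((F k) ^ r) ∘ₗ (LinearMap.single ℚ (fun j => V j k) i) = 0 := by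
    intro k r i hne
    apply LinearMap.ext; intro v
    obtain ⟨w, hw⟩ := key k r i v
    simp [LinearMap.comp_apply, hw, Pi.single_eq_of_ne (Ne.symm hne)]
  -- σ^r is fixed-point free for every positive divisor r of m
  have hfree : ∀ r, r ∣ m → 0 < r → ∀ i, (σ ^ r) i ≠ i := by
    intro r hr hrpos i hfix
    obtain ⟨j, hij⟩ := hΛcover i
    have hper : Function.IsPeriodicPt (⇑σ) r i := hfix
    have hdvd : Function.minimalPeriod (⇑σ) i ∣ r := hper.minimalPeriod_dvd
    set p := Function.minimalPeriod (⇑σ) i with hp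
    have hppos : 0 < p := hper.minimalPeriod_pos hrpos
    have hΛeq : Λ j = Finset.image (fun n => (σ ^ n) i) (Finset.range p) := by
      ext i'
      rw [hΛorb j i hij i', Finset.mem_image]
      constructor
      · rintro ⟨n, hn⟩
        refine ⟨n % p, Finset.mem_range.2 (Nat.mod_lt _ hppos), ?_⟩
        have := Function.iterate_mod_minimalPeriod_eq (f := ⇑σ) (x := i) (n := n)
        exact this.trans hn
      · rintro ⟨n, _, hn⟩
        exact ⟨n, hn⟩
    have hcard : (Λ j).card = p := by
      rw [hΛeq, Finset.card_image_of_injOn, Finset.card_range]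
      intro a ha b hb hab
      exact Function.iterate_injOn_Iio_minimalPeriod
        (Set.mem_Iio.2 (Finset.mem_range.1 ha)) (Set.mem_Iio.2 (Finset.mem_range.1 hb)) hab
    exact hnd j (by rw [hsVec, hcard]; exact hdvd.trans hr)
  -- L r = 1 on the divisors of m
  have hL1 : ∀ r ∈ m.divisors, L r = 1 := by
    intro r hr
    rw [Nat.mem_divisors] at hr
    have hrpos : 0 < r := Nat.pos_of_dvd_of_pos hr.1 (by omega)
    have htr : ∀ k : Fin N, LinearMap.trace ℚ (Π i, V i k) ((F k) ^ r) = 0 := by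
      intro k
      rw [trace_pi_eq_sum_diag]
      refine Finset.sum_eq_zero fun i _ => ?_
      rw [hzero k r i (hfree r hr.1 hrpos i), map_zero]
    simp [hL, htr]
  -- Möbius sum vanishes
  have hmoeb : (∑ d ∈ m.divisors, (ArithmeticFunction.moebius d : ℤ)) = 0 := by
    have h2 : ((ArithmeticFunction.moebius * ↑ArithmeticFunction.zeta :
        ArithmeticFunction ℤ)) m = (1 : ArithmeticFunction ℤ) m := by
      rw [ArithmeticFunction.moebius_mul_coe_zeta]
    rw [ArithmeticFunction.coe_mul_zeta_apply, ArithmeticFunction.one_apply,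
      if_neg (by omega : ¬ m = 1)] at h2
    exact h2
  rw [hℓ]
  calc ∑ r ∈ m.divisors, ((ArithmeticFunction.moebius (m / r) : ℤ) : ℚ) * L r
      = ∑ r ∈ m.divisors, ((ArithmeticFunction.moebius (m / r) : ℤ) : ℚ) :=
        Finset.sum_congr rfl fun r hr => by rw [hL1 r hr, mul_one]
    _ = ∑ r ∈ m.divisors, ((ArithmeticFunction.moebius r : ℤ) : ℚ) :=
        Nat.sum_div_divisors m (fun r => ((ArithmeticFunction.moebius r : ℤ) : ℚ))
    _ = ((∑ r ∈ m.divisors, (ArithmeticFunction.moebius r : ℤ) : ℤ) : ℚ) := by push_cast; ring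
    _ = 0 := by rw [hmoeb]; norm_num
end

section
/- Same-sign criterion for algebraic periods: in the permutative algebraic model, let m > 1 be such that ℓ(f_ii^m) ≠ 0 for at least one i ∈ {1,…,s}, and such that all the nonzero numbers among ℓ(f_11^m),…,ℓ(f_ss^m) have the same sign (there are no i, i' with ℓ(f_ii^m) > 0 > ℓ(f_{i'i'}^m)). Then ℓ(f^m) ≠ 0, i.e. m ∈ APer_L(f). -/
open LinearMap in
lemma trace_pi_eq_s12 {ι : Type*} [Fintype ι] [DecidableEq ι] (M : ι → Type*)
    [∀ i, AddCommGroup (M i)] [∀ i, Module ℚ (M i)] [∀ i, FiniteDimensional ℚ (M i)]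
    (g : (Π i, M i) →ₗ[ℚ] Π i, M i) :
    LinearMap.trace ℚ _ g
      = ∑ i, LinearMap.trace ℚ (M i) ((proj i) ∘ₗ g ∘ₗ LinearMap.single ℚ M i) := by
  have h : g = ∑ i : ι, (g ∘ₗ LinearMap.single ℚ M i) ∘ₗ proj i := by
    apply LinearMap.ext; intro x
    rw [LinearMap.sum_apply]
    simp only [comp_apply, proj_apply]
    simp only [LinearMap.single_apply]
    rw [← map_sum, Finset.univ_sum_single]
  conv_lhs => rw [h]
  rw [map_sum]
  refine Finset.sum_congr rfl fun i _ => ?_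
  rw [LinearMap.trace_comp_comm']

lemma moeb_sum_zero {m : ℕ} (hm : 1 < m) :
    ∑ r ∈ m.divisors, ((ArithmeticFunction.moebius (m / r) : ℤ) : ℚ) = 0 := by
  rw [Nat.sum_div_divisors m (fun d => ((ArithmeticFunction.moebius d : ℤ) : ℚ))]
  have : ∑ d ∈ m.divisors, (ArithmeticFunction.moebius d : ℤ) = 0 := by
    have h1 : (ArithmeticFunction.moebius * ArithmeticFunction.zeta : ArithmeticFunction ℤ) m
        = ∑ d ∈ m.divisors, ArithmeticFunction.moebius d := by
      rw [ArithmeticFunction.coe_mul_zeta_apply]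
    rw [ArithmeticFunction.moebius_mul_coe_zeta] at h1
    rw [← h1, ArithmeticFunction.one_apply_ne (by omega)]
  rw [← Int.cast_sum, this, Int.cast_zero]


/-- **Same-sign criterion for algebraic periods.**
In the permutative algebraic model (`σ` a permutation of `{1,…,s}` with orbits
`Λ 1, …, Λ q`; `F k` the block-permutation endomorphism of `⊕_i V i k` built from the
maps `A i k : V i k → V (σ i) k`), with Lefschetz numbers `L`, coordinate Lefschetz
numbers `Lc` and Dold coefficients `ℓ`, `ℓc` as below: if `m > 1`, some coordinate
Dold coefficient `ℓ(f_ii^m)` is nonzero, and there are no `i, i'` with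
`ℓ(f_ii^m) > 0 > ℓ(f_{i'i'}^m)` (all nonzero coordinate Dold coefficients of order `m`
have the same sign), then `ℓ(f^m) ≠ 0`, i.e. `m ∈ APer_L(f)`. -/
theorem stmt12 (s N q : ℕ) (hs : 1 ≤ s) (hN : 1 ≤ N)
(σ : Equiv.Perm (Fin s))
    (Λ : Fin q → Finset (Fin s))
    (hΛorb : ∀ j, ∀ i ∈ Λ j, ∀ i', i' ∈ Λ j ↔ ∃ m : ℕ, (σ ^ m) i = i')
    (hΛne : ∀ j, (Λ j).Nonempty)
    (hΛcover : ∀ i, ∃ j, i ∈ Λ j)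
    (hΛdisj : ∀ j j', j ≠ j' → Disjoint (Λ j) (Λ j'))
    (sVec : Fin q → ℕ) (hsVec : ∀ j, sVec j = (Λ j).card)
    (V : Fin s → Fin N → Type*)
    [∀ i k, AddCommGroup (V i k)] [∀ i k, Module ℚ (V i k)]
    [∀ i k, FiniteDimensional ℚ (V i k)]
    (hdim : ∀ (k : Fin N) (i i' : Fin s), (∃ m : ℕ, (σ ^ m) i = i') →
      Module.finrank ℚ (V i k) = Module.finrank ℚ (V i' k))
    (A : ∀ i k, V i k →ₗ[ℚ] V (σ i) k)
    (F : ∀ k, (Π i, V i k) →ₗ[ℚ] (Π i, V i k))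
    (hF : ∀ k (i : Fin s) (v : V i k), F k (Pi.single i v) = Pi.single (σ i) (A i k v))
    (L : ℕ → ℚ)
    (hL : ∀ m, L m =
      1 + ∑ k : Fin N, (-1 : ℚ) ^ ((k : ℕ) + 1) *
        LinearMap.trace ℚ (Π i, V i k) ((F k) ^ m))
    (Lc : Fin s → ℕ → ℚ)
    (hLc : ∀ i m, Lc i m =
      1 + ∑ k : Fin N, (-1 : ℚ) ^ ((k : ℕ) + 1) *
        LinearMap.trace ℚ (V i k)
          ((LinearMap.proj i) ∘ₗ ((F k) ^ m) ∘ₗ (LinearMap.single ℚ (fun j => V j k) i)))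
    (ℓ : ℕ → ℚ)
    (hℓ : ∀ m, ℓ m = ∑ r ∈ m.divisors, ((ArithmeticFunction.moebius (m / r) : ℤ) : ℚ) * L r)
    (ℓc : Fin s → ℕ → ℚ)
    (hℓc : ∀ i m, ℓc i m =
      ∑ r ∈ m.divisors, ((ArithmeticFunction.moebius (m / r) : ℤ) : ℚ) * Lc i r) :
    ∀ m, 1 < m → (∃ i : Fin s, ℓc i m ≠ 0) →
      (¬ ∃ i i' : Fin s, 0 < ℓc i m ∧ ℓc i' m < 0) →
      ℓ m ≠ 0 := by
  intro m hm hne hsign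
  -- Step 1: ∑ i, Lc i r = L r + (s - 1)
  have key : ∀ r : ℕ, ∑ i : Fin s, Lc i r = L r + ((s : ℚ) - 1) := by
    intro r
    have htr : ∀ k : Fin N,
        LinearMap.trace ℚ (Π i, V i k) ((F k) ^ r)
          = ∑ i : Fin s, LinearMap.trace ℚ (V i k)
              ((LinearMap.proj i) ∘ₗ ((F k) ^ r) ∘ₗ (LinearMap.single ℚ (fun j => V j k) i)) :=
      fun k => trace_pi_eq_s12 (fun j => V j k) ((F k) ^ r)
    calc ∑ i : Fin s, Lc i r
        = ∑ i : Fin s, (1 + ∑ k : Fin N, (-1 : ℚ) ^ ((k : ℕ) + 1) *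
            LinearMap.trace ℚ (V i k)
              ((LinearMap.proj i) ∘ₗ ((F k) ^ r) ∘ₗ (LinearMap.single ℚ (fun j => V j k) i))) :=
          Finset.sum_congr rfl fun i _ => hLc i r
      _ = (s : ℚ) + ∑ k : Fin N, (-1 : ℚ) ^ ((k : ℕ) + 1) *
            LinearMap.trace ℚ (Π i, V i k) ((F k) ^ r) := by
          rw [Finset.sum_add_distrib, Finset.sum_const, Finset.card_univ, Fintype.card_fin,
            nsmul_eq_mul, mul_one, Finset.sum_comm]
          congr 1
          refine Finset.sum_congr rfl fun k _ => ?_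
          rw [htr k, Finset.mul_sum]
      _ = L r + ((s : ℚ) - 1) := by rw [hL r]; ring
  -- Step 2: ℓ m = ∑ i, ℓc i m
  have hsum : ℓ m = ∑ i : Fin s, ℓc i m := by
    have h1 : ∑ i : Fin s, ℓc i m
        = ∑ r ∈ m.divisors, ((ArithmeticFunction.moebius (m / r) : ℤ) : ℚ) * (∑ i, Lc i r) := by
      simp only [hℓc]
      rw [Finset.sum_comm]
      exact Finset.sum_congr rfl fun r _ => (Finset.mul_sum _ _ _).symm
    rw [h1, hℓ m]
    have h2 : ∀ r ∈ m.divisors,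
        ((ArithmeticFunction.moebius (m / r) : ℤ) : ℚ) * (∑ i, Lc i r)
          = ((ArithmeticFunction.moebius (m / r) : ℤ) : ℚ) * L r
            + ((s : ℚ) - 1) * ((ArithmeticFunction.moebius (m / r) : ℤ) : ℚ) := by
      intro r _
      rw [key r]; ring
    rw [Finset.sum_congr rfl h2, Finset.sum_add_distrib, ← Finset.mul_sum,
      moeb_sum_zero hm, mul_zero, add_zero]
  -- Step 3: sign argument
  rw [hsum]
  push_neg at hsign
  obtain ⟨i0, hi0⟩ := hne
  rcases lt_or_gt_of_ne hi0 with hneg | hpos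
  · have hall : ∀ i : Fin s, ℓc i m ≤ 0 := by
      intro i
      by_contra h
      exact absurd (hsign i i0 (lt_of_not_ge h)) (not_le.mpr hneg)
    have : ∑ i : Fin s, ℓc i m < 0 := by
      have := Finset.sum_lt_sum (f := fun i => ℓc i m) (g := fun _ => (0:ℚ))
        (fun i _ => hall i) ⟨i0, Finset.mem_univ i0, hneg⟩
      simpa using this
    exact ne_of_lt this
  · have hall : ∀ i : Fin s, 0 ≤ ℓc i m := by
      intro i
      by_contra h
      exact absurd (hsign i0 i hpos) (not_le.mpr (lt_of_not_ge h))
    have : 0 < ∑ i : Fin s, ℓc i m := by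
      have := Finset.sum_lt_sum (f := fun _ => (0:ℚ)) (g := fun i => ℓc i m)
        (fun i _ => hall i) ⟨i0, Finset.mem_univ i0, hpos⟩
      simpa using this
    exact (ne_of_gt this)
end

section
/- Algebraic periods of the wedge map are controlled by those of the coordinate maps: in the permutative algebraic model, every m > 1 belonging to APer_L(f) belongs to APer_L(f_ii) for some i ∈ {1,…,s}; equivalently, APer_L(f) ⊆ {1} ∪ ⋃_{i=1}^s APer_L(f_ii). -/
open LinearMap Finset

lemma trace_pi_aux {ι : Type*} [Fintype ι] [DecidableEq ι]
    (φ : ι → Type*) [∀ i, AddCommGroup (φ i)] [∀ i, Module ℚ (φ i)]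
    [∀ i, FiniteDimensional ℚ (φ i)] (G : (Π i, φ i) →ₗ[ℚ] (Π i, φ i)) :
    LinearMap.trace ℚ (Π i, φ i) G =
      ∑ i, LinearMap.trace ℚ (φ i)
        ((LinearMap.proj i) ∘ₗ G ∘ₗ (LinearMap.single ℚ φ i)) := by
  have hid : (∑ i, (LinearMap.single ℚ φ i) ∘ₗ (LinearMap.proj i : (Π i, φ i) →ₗ[ℚ] φ i))
      = LinearMap.id := by
    ext v j
    simp [Finset.sum_apply, Finset.univ_sum_single]
  calc LinearMap.trace ℚ (Π i, φ i) G
      = LinearMap.trace ℚ (Π i, φ i)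
        ((∑ i, (LinearMap.single ℚ φ i) ∘ₗ (LinearMap.proj i)) ∘ₗ G) := by
        rw [hid, LinearMap.id_comp]
    _ = ∑ i, LinearMap.trace ℚ (Π i, φ i)
        ((LinearMap.single ℚ φ i) ∘ₗ ((LinearMap.proj i) ∘ₗ G)) := by
        rw [show (∑ i, (LinearMap.single ℚ φ i) ∘ₗ (LinearMap.proj i)) ∘ₗ G
          = ∑ i, (LinearMap.single ℚ φ i) ∘ₗ ((LinearMap.proj i) ∘ₗ G) by
            ext v; simp [LinearMap.sum_apply], map_sum]
    _ = ∑ i, LinearMap.trace ℚ (φ i)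
        ((LinearMap.proj i) ∘ₗ G ∘ₗ (LinearMap.single ℚ φ i)) := by
        refine Finset.sum_congr rfl fun i _ => ?_
        rw [LinearMap.trace_comp_comm', LinearMap.comp_assoc]

lemma moebius_sum_aux (m : ℕ) (hm : 1 < m) :
    ∑ r ∈ m.divisors, ((ArithmeticFunction.moebius (m / r) : ℤ) : ℚ) = 0 := by
  have h0 : m ≠ 0 := by omega
  have h1 : m ≠ 1 := by omega
  have := ArithmeticFunction.moebius_mul_coe_zeta
  have happ := congrArg (fun f : ArithmeticFunction ℤ => f m) this
  simp only [ArithmeticFunction.coe_mul_zeta_apply, ArithmeticFunction.one_apply, h1,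
    if_false] at happ
  rw [Nat.sum_div_divisors m (fun d => ((ArithmeticFunction.moebius d : ℤ) : ℚ))]
  exact_mod_cast congrArg (fun z : ℤ => (z : ℚ)) happ

/-- **Algebraic periods of the wedge map are controlled by those of the coordinate maps.**
In the permutative algebraic model (`σ` a permutation of `{1,…,s}` with orbits
`Λ 1, …, Λ q`; `F k` the block-permutation endomorphism of `⊕_i V i k` built from the
maps `A i k : V i k → V (σ i) k`), with Lefschetz numbers `L`, coordinate Lefschetz
numbers `Lc` and Dold coefficients `ℓ`, `ℓc` as below: every `m > 1` with
`ℓ(f^m) ≠ 0` (i.e. `m ∈ APer_L(f)`) satisfies `ℓ(f_ii^m) ≠ 0` for some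
`i ∈ {1,…,s}` (i.e. `m ∈ APer_L(f_ii)`); equivalently
`APer_L(f) ⊆ {1} ∪ ⋃_{i=1}^s APer_L(f_ii)`. -/
theorem stmt13 (s N q : ℕ) (hs : 1 ≤ s) (hN : 1 ≤ N)
(σ : Equiv.Perm (Fin s))
    (Λ : Fin q → Finset (Fin s))
    (hΛorb : ∀ j, ∀ i ∈ Λ j, ∀ i', i' ∈ Λ j ↔ ∃ m : ℕ, (σ ^ m) i = i')
    (hΛne : ∀ j, (Λ j).Nonempty)
    (hΛcover : ∀ i, ∃ j, i ∈ Λ j)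
    (hΛdisj : ∀ j j', j ≠ j' → Disjoint (Λ j) (Λ j'))
    (sVec : Fin q → ℕ) (hsVec : ∀ j, sVec j = (Λ j).card)
    (V : Fin s → Fin N → Type*)
    [∀ i k, AddCommGroup (V i k)] [∀ i k, Module ℚ (V i k)]
    [∀ i k, FiniteDimensional ℚ (V i k)]
    (hdim : ∀ (k : Fin N) (i i' : Fin s), (∃ m : ℕ, (σ ^ m) i = i') →
      Module.finrank ℚ (V i k) = Module.finrank ℚ (V i' k))
    (A : ∀ i k, V i k →ₗ[ℚ] V (σ i) k)
    (F : ∀ k, (Π i, V i k) →ₗ[ℚ] (Π i, V i k))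
    (hF : ∀ k (i : Fin s) (v : V i k), F k (Pi.single i v) = Pi.single (σ i) (A i k v))
    (L : ℕ → ℚ)
    (hL : ∀ m, L m =
      1 + ∑ k : Fin N, (-1 : ℚ) ^ ((k : ℕ) + 1) *
        LinearMap.trace ℚ (Π i, V i k) ((F k) ^ m))
    (Lc : Fin s → ℕ → ℚ)
    (hLc : ∀ i m, Lc i m =
      1 + ∑ k : Fin N, (-1 : ℚ) ^ ((k : ℕ) + 1) *
        LinearMap.trace ℚ (V i k)
          ((LinearMap.proj i) ∘ₗ ((F k) ^ m) ∘ₗ (LinearMap.single ℚ (fun j => V j k) i)))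
    (ℓ : ℕ → ℚ)
    (hℓ : ∀ m, ℓ m = ∑ r ∈ m.divisors, ((ArithmeticFunction.moebius (m / r) : ℤ) : ℚ) * L r)
    (ℓc : Fin s → ℕ → ℚ)
    (hℓc : ∀ i m, ℓc i m =
      ∑ r ∈ m.divisors, ((ArithmeticFunction.moebius (m / r) : ℤ) : ℚ) * Lc i r) :
    ∀ m, 1 < m → ℓ m ≠ 0 → ∃ i : Fin s, ℓc i m ≠ 0 := by
  intro m hm hℓm
  by_contra hcon
  push_neg at hcon
  apply hℓm
  -- key: ∑ i, Lc i r = L r + (s - 1)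
  have hsum : ∀ r : ℕ, ∑ i : Fin s, Lc i r = L r + ((s : ℚ) - 1) := by
    intro r
    simp only [hLc, hL]
    rw [Finset.sum_add_distrib, Finset.sum_comm]
    have : ∀ k : Fin N,
        ∑ i : Fin s, (-1 : ℚ) ^ ((k : ℕ) + 1) *
          LinearMap.trace ℚ (V i k)
            ((LinearMap.proj i) ∘ₗ ((F k) ^ r) ∘ₗ (LinearMap.single ℚ (fun j => V j k) i))
        = (-1 : ℚ) ^ ((k : ℕ) + 1) *
          LinearMap.trace ℚ (Π i, V i k) ((F k) ^ r) := by
      intro k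
      rw [← Finset.mul_sum, ← trace_pi_aux (fun i => V i k) ((F k) ^ r)]
    simp only [this]
    have hcard : ∑ _i : Fin s, (1 : ℚ) = (s : ℚ) := by simp
    rw [hcard]
    ring
  -- sum of ℓc equals ℓ m
  have key : ∑ i : Fin s, ℓc i m = ℓ m := by
    simp only [hℓc, hℓ]
    rw [Finset.sum_comm]
    have : ∀ r ∈ m.divisors,
        ∑ i : Fin s, ((ArithmeticFunction.moebius (m / r) : ℤ) : ℚ) * Lc i r
        = ((ArithmeticFunction.moebius (m / r) : ℤ) : ℚ) * L r
          + ((ArithmeticFunction.moebius (m / r) : ℤ) : ℚ) * ((s : ℚ) - 1) := by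
      intro r _
      rw [← Finset.mul_sum, hsum r, mul_add]
    rw [Finset.sum_congr rfl this, Finset.sum_add_distrib, ← Finset.sum_mul,
      moebius_sum_aux m hm, zero_mul, add_zero]
  rw [← key]
  exact Finset.sum_eq_zero fun i _ => hcon i
end

section
/- A permutative self-map of a wedge sum of at least two tori whose coordinate maps have nonzero eigenvalues is not Lefschetz periodic point free: let n ≥ 1 and s ≥ 2 be integers, σ a permutation of {1,…,s}, and A₁,…,A_s integer n×n matrices with det(A_i) ≠ 0 for every i. Define, for m ≥ 1, L(f^m) := 1 + ∑_{i : σ^m(i) = i} ( det(I_n − A_{σ^{m−1}(i)} ⋯ A_{σ(i)}·A_i) − 1 ). Then there exists m ≥ 1 with L(f^m) ≠ 0. -/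
/-- **A permutative self-map of a wedge sum of at least two tori whose coordinate maps have
nonzero eigenvalues is not Lefschetz periodic point free.**
Algebraic model: `A i` is the integer `n×n` matrix induced on `H₁(T^n; ℤ) ≅ ℤ^n` by the
coordinate map `f_{iσ(i)} : T^n → T^n` of a continuous permutative self-map `f` of the wedge
sum of `s` copies of `T^n` with permutation `σ`, and `det (A i) ≠ 0` says all eigenvalues
are nonzero.  Here `P i m = A_{σ^{m−1}(i)} ⋯ A_{σ(i)} · A_i` is the matrix induced on `H₁`
by the `m`-th return map, and the `m`-th Lefschetz number is
`L(f^m) = 1 + ∑_{i : σ^m(i)=i} (det(I_n − P i m) − 1)`.  Then some `L(f^m)`, `m ≥ 1`, is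
nonzero, i.e. `f` is not Lefschetz periodic point free. -/
theorem stmt15 (n s : ℕ) (hn : 1 ≤ n) (hs : 2 ≤ s)
    (σ : Equiv.Perm (Fin s))
    (A : Fin s → Matrix (Fin n) (Fin n) ℤ)
    (hA : ∀ i, (A i).det ≠ 0)
    (P : Fin s → ℕ → Matrix (Fin n) (Fin n) ℤ)
    (hP0 : ∀ i, P i 0 = 1)
    (hPsucc : ∀ i m, P i (m + 1) = A ((σ ^ m) i) * P i m)
    (L : ℕ → ℤ)
    (hL : ∀ m, L m =
      1 + ∑ i ∈ Finset.univ.filter (fun i : Fin s => (σ ^ m) i = i),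
        ((1 - P i m).det - 1)) :
    ∃ m, 1 ≤ m ∧ L m ≠ 0 := by
  by_contra hcon
  push_neg at hcon
  -- additivity of P
  have Padd : ∀ (a b : ℕ) (i : Fin s), P i (a + b) = P ((σ ^ a) i) b * P i a := by
    intro a b
    induction b with
    | zero => intro i; simp [hP0]
    | succ b ih =>
      intro i
      have : a + (b + 1) = (a + b) + 1 := by ring
      rw [this, hPsucc, ih, hPsucc]
      have hc2 : (σ ^ b) ((σ ^ a) i) = (σ ^ (a + b)) i := by
        rw [← Equiv.Perm.mul_apply, ← pow_add, add_comm]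
      rw [hc2, mul_assoc]
  -- determinants nonzero
  have hdet : ∀ (m : ℕ) (i : Fin s), (P i m).det ≠ 0 := by
    intro m
    induction m with
    | zero => intro i; simp [hP0]
    | succ m ih =>
      intro i
      rw [hPsucc, Matrix.det_mul]
      exact mul_ne_zero (hA _) (ih i)
  -- order of σ
  set r : ℕ := orderOf σ with hr
  have hrpos : 0 < r := orderOf_pos σ
  have hσr : σ ^ r = 1 := pow_orderOf_eq_one σ
  set B : Fin s → Matrix (Fin n) (Fin n) ℤ := fun i => P i r with hB
  -- powers
  have hσkr : ∀ k : ℕ, σ ^ (k * r) = 1 := by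
    intro k
    rw [mul_comm, pow_mul, hσr, one_pow]
  have Hpow : ∀ (k : ℕ) (i : Fin s), P i (k * r) = (B i) ^ k := by
    intro k
    induction k with
    | zero => intro i; simp [hP0]
    | succ k ih =>
      intro i
      have h1 : (k + 1) * r = k * r + r := by ring
      rw [h1, Padd, ih, hσkr]
      show P i r * B i ^ k = B i ^ (k + 1)
      rw [pow_succ']
  -- key equation
  have key : ∀ k : ℕ, 1 ≤ k → ∑ i : Fin s, (1 - (B i) ^ k).det = (s : ℤ) - 1 := by
    intro k hk
    have hm1 : 1 ≤ k * r := Nat.one_le_iff_ne_zero.mpr (by positivity)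
    have h0 : L (k * r) = 0 := hcon _ hm1
    rw [hL] at h0
    have hfil : (Finset.univ.filter (fun i : Fin s => (σ ^ (k * r)) i = i)) = Finset.univ := by
      rw [hσkr]; simp
    rw [hfil] at h0
    have : ∑ i : Fin s, ((1 - P i (k * r)).det - 1)
        = (∑ i : Fin s, (1 - (B i) ^ k).det) - (s : ℤ) := by
      rw [Finset.sum_sub_distrib]
      simp [Hpow]
    rw [this] at h0
    linarith
  -- pick a big prime
  set D : ℤ := ((s : ℤ) - 1) * ∏ i : Fin s, (B i).det with hD
  have hDne : D ≠ 0 := by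
    apply mul_ne_zero
    · have : (2 : ℤ) ≤ (s : ℤ) := by exact_mod_cast hs
      linarith
    · exact Finset.prod_ne_zero_iff.mpr fun i _ => hdet r i
  obtain ⟨p, hple, hp⟩ := Nat.exists_infinite_primes (D.natAbs + 1)
  haveI : Fact p.Prime := ⟨hp⟩
  -- any nonzero divisor of D is nonzero mod p
  have hndvd : ∀ x : ℤ, x ≠ 0 → x ∣ D → (x : ZMod p) ≠ 0 := by
    intro x hx hxD h0
    rw [ZMod.intCast_zmod_eq_zero_iff_dvd] at h0
    have hpD : (p : ℤ) ∣ D := h0.trans hxD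
    have hpD' : p ∣ D.natAbs := by
      have := Int.natAbs_dvd_natAbs.mpr hpD
      simpa using this
    have := Nat.le_of_dvd (Int.natAbs_pos.mpr hDne) hpD'
    omega
  -- matrices mod p
  set f : Matrix (Fin n) (Fin n) ℤ →+* Matrix (Fin n) (Fin n) (ZMod p) :=
    (Int.castRingHom (ZMod p)).mapMatrix with hf
  have hMunit : ∀ i : Fin s, IsUnit (f (B i)) := by
    intro i
    rw [Matrix.isUnit_iff_isUnit_det]
    have hdet' : (f (B i)).det = ((B i).det : ZMod p) := (RingHom.map_det _ _).symm
    rw [hdet', isUnit_iff_ne_zero]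
    exact hndvd _ (hdet r i) (Dvd.dvd.mul_left (Finset.dvd_prod_of_mem _ (Finset.mem_univ i)) _)
  -- exponent killing all matrices mod p
  set c : ℕ := Fintype.card ((Matrix (Fin n) (Fin n) (ZMod p))ˣ) with hc
  have hcpos : 1 ≤ c := Fintype.card_pos
  have hMpow : ∀ i : Fin s, (f (B i)) ^ c = 1 := by
    intro i
    obtain ⟨u, hu⟩ := hMunit i
    have : u ^ c = 1 := pow_card_eq_one
    calc (f (B i)) ^ c = ((u ^ c : _ˣ) : Matrix (Fin n) (Fin n) (ZMod p)) := by
          rw [← hu]; exact (Units.val_pow_eq_pow_val u c).symm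
      _ = 1 := by rw [this]; rfl
  -- cast key equation mod p
  have hkey := key c hcpos
  have hcast : ((∑ i : Fin s, (1 - (B i) ^ c).det : ℤ) : ZMod p) = ((s : ℤ) - 1 : ℤ) := by
    exact_mod_cast congrArg (fun x : ℤ => (x : ZMod p)) hkey
  have hLHS : ((∑ i : Fin s, (1 - (B i) ^ c).det : ℤ) : ZMod p) = 0 := by
    rw [Int.cast_sum]
    have : ∀ i : Fin s, (((1 - (B i) ^ c).det : ℤ) : ZMod p) = 0 := by
      intro i
      have h1 : (f (1 - (B i) ^ c)).det = (((1 - (B i) ^ c).det : ℤ) : ZMod p) :=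
        (RingHom.map_det _ _).symm
      rw [← h1, map_sub, map_one, map_pow, hMpow, sub_self]
      haveI : Nonempty (Fin n) := ⟨⟨0, hn⟩⟩
      exact Matrix.det_zero
    calc (∑ i : Fin s, (((1 - (B i) ^ c).det : ℤ) : ZMod p))
        = ∑ i : Fin s, (0 : ZMod p) := Finset.sum_congr rfl fun i _ => this i
      _ = 0 := by simp
  rw [hLHS] at hcast
  have : (((s : ℤ) - 1 : ℤ) : ZMod p) ≠ 0 := by
    apply hndvd
    · have : (2 : ℤ) ≤ (s : ℤ) := by exact_mod_cast hs
      linarith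
    · exact Dvd.intro _ rfl
  exact this hcast.symm
end
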